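/- arXiv:1607.08002 — 4 statements merged into one kernel-verified Lean document; each statement's English description precedes it below -/
import Mathlib

section
/- Suppose W is a Hermitian operator on ℂ² ⊗ ℂ² such that for decompositions W = ∑_{s,t} β^{i,j}_{s,t} (m_i τ_s m_i†)ᵀ ⊗ (m_j ω_t m_j†)ᵀ (for each i,j ∈ {1,2,3,4}, with m_1=I, m_2=σ_z, m_3=σ_x, m_4=σ_xσ_z, and density matrices τ_s, ω_t), and define, for a separable state σ_AB = ∑_x p_x σ_A^x ⊗ σ_B^x (p_x ≥ 0, ∑ p_x = 1) and arbitrary POVMs {A_i}, {B_j} on ℂ²⊗ℂ², I(σ_AB) = ∑_{s,t,i,j} β^{i,j}_{s,t} Tr[(A_i ⊗ B_j)(τ_s ⊗ σ_AB ⊗ ω_t)]. If Tr[W σ] ≥ 0 for all product states σ = α ⊗ β with α, β positive semidefinite, then I(σ_AB) ≥ 0. -/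
open Matrix Kronecker ComplexOrder

noncomputable section

def IsDensity {n : Type*} [Fintype n] [DecidableEq n] (ρ : Matrix n n ℂ) : Prop :=
  ρ.PosSemidef ∧ ρ.trace = 1

def σx : Matrix (Fin 2) (Fin 2) ℂ := !![0, 1; 1, 0]
def σz : Matrix (Fin 2) (Fin 2) ℂ := !![1, 0; 0, -1]

/-- m₁ = I, m₂ = σ_z, m₃ = σ_x, m₄ = σ_x σ_z. -/
def mMat : Fin 4 → Matrix (Fin 2) (Fin 2) ℂ := ![1, σz, σx, σx * σz]

/-- The four-partite state τ ⊗ σ_AB ⊗ ω with tensor factors ordered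
(ancilla A, system A, system B, ancilla B). -/
def bigState (τ ω : Matrix (Fin 2) (Fin 2) ℂ)
    (σ : Matrix (Fin 2 × Fin 2) (Fin 2 × Fin 2) ℂ) :
    Matrix ((Fin 2 × Fin 2) × (Fin 2 × Fin 2)) ((Fin 2 × Fin 2) × (Fin 2 × Fin 2)) ℂ :=
  fun p q => τ p.1.1 q.1.1 * σ (p.1.2, p.2.1) (q.1.2, q.2.1) * ω p.2.2 q.2.2

set_option maxHeartbeats 3200000

/-- The sandwiching operator implementing the partial trace over the system-A factor. -/
def Cop (S : Matrix (Fin 2) (Fin 2) ℂ) (k : Fin 2) : Matrix (Fin 2) (Fin 2 × Fin 2) ℂ :=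
  fun a cd => if a = cd.1 then S k cd.2 else 0

/-- The sandwiching operator implementing the partial trace over the system-B factor. -/
def Dop (S : Matrix (Fin 2) (Fin 2) ℂ) (k : Fin 2) : Matrix (Fin 2) (Fin 2 × Fin 2) ℂ :=
  fun b cd => if b = cd.2 then S k cd.1 else 0

lemma traceA (A' : Matrix (Fin 2 × Fin 2) (Fin 2 × Fin 2) ℂ)
    (S τ' : Matrix (Fin 2) (Fin 2) ℂ) :
    (A' * (τ' ⊗ₖ (Sᴴ * S))).trace = ((∑ k : Fin 2, Cop S k * A' * (Cop S k)ᴴ) * τ').trace := by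
  simp only [Matrix.trace, Matrix.diag, Matrix.mul_apply, Matrix.kroneckerMap_apply,
    Matrix.conjTranspose_apply, Cop, Finset.sum_apply, Matrix.sum_apply,
    Fintype.sum_prod_type, Fin.sum_univ_two, Matrix.add_apply]
  simp (config := { decide := true }) only [ite_mul, mul_ite, zero_mul, mul_zero, reduceIte,
    if_true, if_false, star_zero, add_zero, zero_add]
  ring

lemma traceB (B' : Matrix (Fin 2 × Fin 2) (Fin 2 × Fin 2) ℂ)
    (S ω' : Matrix (Fin 2) (Fin 2) ℂ) :
    (B' * ((Sᴴ * S) ⊗ₖ ω')).trace = ((∑ k : Fin 2, Dop S k * B' * (Dop S k)ᴴ) * ω').trace := by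
  simp only [Matrix.trace, Matrix.diag, Matrix.mul_apply, Matrix.kroneckerMap_apply,
    Matrix.conjTranspose_apply, Dop, Finset.sum_apply, Matrix.sum_apply,
    Fintype.sum_prod_type, Fin.sum_univ_two, Matrix.add_apply]
  simp (config := { decide := true }) only [ite_mul, mul_ite, zero_mul, mul_zero, reduceIte,
    if_true, if_false, star_zero, add_zero, zero_add]
  ring

lemma redA_psd {A' : Matrix (Fin 2 × Fin 2) (Fin 2 × Fin 2) ℂ} (hA' : A'.PosSemidef)
    (S : Matrix (Fin 2) (Fin 2) ℂ) :
    (∑ k : Fin 2, Cop S k * A' * (Cop S k)ᴴ).PosSemidef := by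
  rw [Fin.sum_univ_two]
  exact (hA'.mul_mul_conjTranspose_same _).add (hA'.mul_mul_conjTranspose_same _)

lemma redB_psd {B' : Matrix (Fin 2 × Fin 2) (Fin 2 × Fin 2) ℂ} (hB' : B'.PosSemidef)
    (S : Matrix (Fin 2) (Fin 2) ℂ) :
    (∑ k : Fin 2, Dop S k * B' * (Dop S k)ᴴ).PosSemidef := by
  rw [Fin.sum_univ_two]
  exact (hB'.mul_mul_conjTranspose_same _).add (hB'.mul_mul_conjTranspose_same _)

lemma mUnit (i : Fin 4) : (mMat i)ᴴ * mMat i = 1 := by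
  fin_cases i <;>
  · ext a b
    fin_cases a <;> fin_cases b <;>
      simp [mMat, σx, σz, Matrix.mul_apply, Fin.sum_univ_two, Matrix.one_apply,
        Matrix.conjTranspose_apply]

lemma trace_conj (m τ' M : Matrix (Fin 2) (Fin 2) ℂ) (hm : mᴴ * m = 1) :
    (m * M * mᴴ * (m * τ' * mᴴ)).trace = (M * τ').trace := by
  have h2 : m * M * mᴴ * (m * τ' * mᴴ) = m * (M * τ') * mᴴ := by
    calc m * M * mᴴ * (m * τ' * mᴴ) = m * M * (mᴴ * m) * τ' * mᴴ := by
          simp only [Matrix.mul_assoc]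
      _ = m * (M * τ') * mᴴ := by rw [hm, Matrix.mul_one, Matrix.mul_assoc m M τ']
  rw [h2, Matrix.trace_mul_cycle, ← Matrix.mul_assoc, hm, Matrix.one_mul]

lemma bigState_sum (τ' ω' : Matrix (Fin 2) (Fin 2) ℂ) {n : ℕ} (c : Fin n → ℂ)
    (σ1 σ2 : Fin n → Matrix (Fin 2) (Fin 2) ℂ) :
    bigState τ' ω' (∑ x, c x • (σ1 x ⊗ₖ σ2 x)) =
      ∑ x, c x • ((τ' ⊗ₖ σ1 x) ⊗ₖ (σ2 x ⊗ₖ ω')) := by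
  ext p q
  simp only [bigState, Matrix.sum_apply, Matrix.smul_apply, Matrix.kroneckerMap_apply,
    smul_eq_mul, Finset.sum_mul, Finset.mul_sum]
  exact Finset.sum_congr rfl fun x _ => by ring

lemma sum5_comm {α : Type*} [AddCommMonoid α] {n : ℕ}
    (f : Fin 4 → Fin 4 → Fin 4 → Fin 4 → Fin n → α) :
    ∑ s : Fin 4, ∑ t : Fin 4, ∑ i : Fin 4, ∑ j : Fin 4, ∑ x, f s t i j x
      = ∑ x, ∑ i, ∑ j, ∑ s, ∑ t, f s t i j x := by
  calc ∑ s : Fin 4, ∑ t : Fin 4, ∑ i : Fin 4, ∑ j : Fin 4, ∑ x, f s t i j x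
      = ∑ s : Fin 4, ∑ t : Fin 4, ∑ i : Fin 4, ∑ x, ∑ j : Fin 4, f s t i j x :=
        Finset.sum_congr rfl fun s _ => Finset.sum_congr rfl fun t _ =>
          Finset.sum_congr rfl fun i _ => Finset.sum_comm
    _ = ∑ s : Fin 4, ∑ t : Fin 4, ∑ x, ∑ i : Fin 4, ∑ j : Fin 4, f s t i j x :=
        Finset.sum_congr rfl fun s _ => Finset.sum_congr rfl fun t _ =>
          Finset.sum_comm
    _ = ∑ s : Fin 4, ∑ x, ∑ t : Fin 4, ∑ i : Fin 4, ∑ j : Fin 4, f s t i j x :=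
        Finset.sum_congr rfl fun s _ => Finset.sum_comm
    _ = ∑ x, ∑ s : Fin 4, ∑ t : Fin 4, ∑ i : Fin 4, ∑ j : Fin 4, f s t i j x :=
        Finset.sum_comm
    _ = ∑ x, ∑ s : Fin 4, ∑ i : Fin 4, ∑ t : Fin 4, ∑ j : Fin 4, f s t i j x :=
        Finset.sum_congr rfl fun x _ => Finset.sum_congr rfl fun s _ =>
          Finset.sum_comm
    _ = ∑ x, ∑ i : Fin 4, ∑ s : Fin 4, ∑ t : Fin 4, ∑ j : Fin 4, f s t i j x :=
        Finset.sum_congr rfl fun x _ => Finset.sum_comm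
    _ = ∑ x, ∑ i : Fin 4, ∑ s : Fin 4, ∑ j : Fin 4, ∑ t : Fin 4, f s t i j x :=
        Finset.sum_congr rfl fun x _ => Finset.sum_congr rfl fun i _ =>
          Finset.sum_congr rfl fun s _ => Finset.sum_comm
    _ = ∑ x, ∑ i : Fin 4, ∑ j : Fin 4, ∑ s : Fin 4, ∑ t : Fin 4, f s t i j x :=
        Finset.sum_congr rfl fun x _ => Finset.sum_congr rfl fun i _ =>
          Finset.sum_comm


/-- If `W` admits, for each pair of Bell outcomes (i,j), a decomposition
`W = ∑_{s,t} β^{i,j}_{s,t} (m_i τ_s m_i†)ᵀ ⊗ (m_j ω_t m_j†)ᵀ`, and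
`Tr[W (α ⊗ β)] ≥ 0` for all positive semidefinite α, β, then the MDIEW value
`I(σ_AB) = ∑_{s,t,i,j} β^{i,j}_{s,t} Tr[(A_i ⊗ B_j)(τ_s ⊗ σ_AB ⊗ ω_t)]` is
nonnegative for every separable state σ_AB and arbitrary POVMs {A_i}, {B_j}. -/
theorem stmt5 (W : Matrix (Fin 2 × Fin 2) (Fin 2 × Fin 2) ℂ) (hW : W.IsHermitian)
    (τ ω : Fin 4 → Matrix (Fin 2) (Fin 2) ℂ)
    (hτ : ∀ s, IsDensity (τ s)) (hω : ∀ t, IsDensity (ω t))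
    (β : Fin 4 → Fin 4 → Fin 4 → Fin 4 → ℝ)  -- β i j s t
    (hdec : ∀ i j : Fin 4,
      W = ∑ s : Fin 4, ∑ t : Fin 4, (β i j s t : ℂ) •
        ((mMat i * τ s * (mMat i)ᴴ)ᵀ ⊗ₖ (mMat j * ω t * (mMat j)ᴴ)ᵀ))
    (hWsep : ∀ α γ : Matrix (Fin 2) (Fin 2) ℂ,
      α.PosSemidef → γ.PosSemidef → 0 ≤ (W * (α ⊗ₖ γ)).trace)
    (A B : Fin 4 → Matrix (Fin 2 × Fin 2) (Fin 2 × Fin 2) ℂ)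
    (hA : ∀ i, (A i).PosSemidef) (hAsum : ∑ i : Fin 4, A i = 1)
    (hB : ∀ j, (B j).PosSemidef) (hBsum : ∑ j : Fin 4, B j = 1)
    (n : ℕ) (p : Fin n → ℝ) (hp : ∀ x, 0 ≤ p x) (hp1 : ∑ x, p x = 1)
    (σA σB : Fin n → Matrix (Fin 2) (Fin 2) ℂ)
    (hσA : ∀ x, IsDensity (σA x)) (hσB : ∀ x, IsDensity (σB x)) :
    0 ≤ ∑ s : Fin 4, ∑ t : Fin 4, ∑ i : Fin 4, ∑ j : Fin 4, (β i j s t : ℂ) *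
      ((A i ⊗ₖ B j) *
        bigState (τ s) (ω t) (∑ x, (p x : ℂ) • (σA x ⊗ₖ σB x))).trace := by
  choose SA hSA using fun x => (by open scoped MatrixOrder in exact CStarAlgebra.nonneg_iff_eq_star_mul_self.mp (hσA x).1.nonneg : ∃ S : Matrix (Fin 2) (Fin 2) ℂ, σA x = Sᴴ * S)
  choose SB hSB using fun x => (by open scoped MatrixOrder in exact CStarAlgebra.nonneg_iff_eq_star_mul_self.mp (hσB x).1.nonneg : ∃ S : Matrix (Fin 2) (Fin 2) ℂ, σB x = Sᴴ * S)
  set M : Fin 4 → Fin n → Matrix (Fin 2) (Fin 2) ℂ :=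
    fun i x => ∑ k : Fin 2, Cop (SA x) k * A i * (Cop (SA x) k)ᴴ with hMdef
  set N : Fin 4 → Fin n → Matrix (Fin 2) (Fin 2) ℂ :=
    fun j x => ∑ k : Fin 2, Dop (SB x) k * B j * (Dop (SB x) k)ᴴ with hNdef
  have hMpsd : ∀ i x, (M i x).PosSemidef := fun i x => redA_psd (hA i) _
  have hNpsd : ∀ j x, (N j x).PosSemidef := fun j x => redB_psd (hB j) _
  have htrA : ∀ i s x, (A i * (τ s ⊗ₖ σA x)).trace = (M i x * τ s).trace := by
    intro i s x; rw [hSA x]; exact traceA _ _ _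
  have htrB : ∀ j t x, (B j * (σB x ⊗ₖ ω t)).trace = (N j x * ω t).trace := by
    intro j t x; rw [hSB x]; exact traceB _ _ _
  have key : ∀ i j x,
      (W * ((mMat i * M i x * (mMat i)ᴴ)ᵀ ⊗ₖ (mMat j * N j x * (mMat j)ᴴ)ᵀ)).trace
        = ∑ s : Fin 4, ∑ t : Fin 4, (β i j s t : ℂ) *
            ((A i * (τ s ⊗ₖ σA x)).trace * (B j * (σB x ⊗ₖ ω t)).trace) := by
    intro i j x
    conv_lhs => rw [hdec i j]
    simp only [Finset.sum_mul, Matrix.smul_mul, trace_sum, trace_smul, smul_eq_mul]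
    refine Finset.sum_congr rfl fun s _ => Finset.sum_congr rfl fun t _ => ?_
    congr 1
    rw [← mul_kronecker_mul, trace_kronecker, ← Matrix.transpose_mul, ← Matrix.transpose_mul,
      trace_transpose, trace_transpose, htrA, htrB,
      trace_conj _ _ _ (mUnit i), trace_conj _ _ _ (mUnit j)]
  have hbig : ∀ s t i j,
      ((A i ⊗ₖ B j) * bigState (τ s) (ω t) (∑ x, (p x : ℂ) • (σA x ⊗ₖ σB x))).trace
        = ∑ x, (p x : ℂ) *
            ((A i * (τ s ⊗ₖ σA x)).trace * (B j * (σB x ⊗ₖ ω t)).trace) := by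
    intro s t i j
    rw [bigState_sum, Matrix.mul_sum, trace_sum]
    refine Finset.sum_congr rfl fun x _ => ?_
    rw [Matrix.mul_smul, trace_smul, smul_eq_mul, ← mul_kronecker_mul, trace_kronecker]
  calc (0:ℂ) ≤ ∑ x, (p x : ℂ) * ∑ i : Fin 4, ∑ j : Fin 4,
        (W * ((mMat i * M i x * (mMat i)ᴴ)ᵀ ⊗ₖ (mMat j * N j x * (mMat j)ᴴ)ᵀ)).trace := by
        refine Finset.sum_nonneg fun x _ => mul_nonneg ?_ ?_
        · exact_mod_cast hp x
        refine Finset.sum_nonneg fun i _ => Finset.sum_nonneg fun j _ => ?_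
        exact hWsep _ _ (((hMpsd i x).mul_mul_conjTranspose_same (mMat i)).transpose)
          (((hNpsd j x).mul_mul_conjTranspose_same (mMat j)).transpose)
    _ = _ := by
        simp only [key, hbig, Finset.mul_sum]
        rw [sum5_comm]
        exact Finset.sum_congr rfl fun x _ => Finset.sum_congr rfl fun i _ =>
          Finset.sum_congr rfl fun j _ => Finset.sum_congr rfl fun s _ =>
            Finset.sum_congr rfl fun t _ => by ring
end
end

section
/- Let W be a Hermitian operator on (ℂ²)^{⊗N} admitting, for each tuple (i_1,…,i_N) ∈ {1,2,3,4}^N, a decomposition W = ∑_{x_1,…,x_N} β^{i_1,…,i_N}_{x_1,…,x_N} (m_{i_1} τ_{1,x_1} m_{i_1}†)ᵀ ⊗ ⋯ ⊗ (m_{i_N} τ_{N,x_N} m_{i_N}†)ᵀ, where m_1=I, m_2=σ_z, m_3=σ_x, m_4=σ_xσ_z and the τ_{k,x_k} are density matrices. If the measurement of each party k is the ideal Bell-state measurement with outcome projectors m_{i_k}|φ⁺⟩⟨φ⁺|m_{i_k}† ⊗-placed on party k's ancilla and system, then I(ρ) = ∑_{i_1,…,i_N, x_1,…,x_N} β^{i_1,…,i_N}_{x_1,…,x_N}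 P(i_1,…,i_N | τ_{1,x_1},…,τ_{N,x_N}) = 2^N Tr[W ρ] for every state ρ on (ℂ²)^{⊗N}. -/
open Matrix Kronecker ComplexOrder

noncomputable section

/-- |φ⁺⟩ = (|00⟩+|11⟩)/√2. -/
def bellPhiPlus : Fin 2 × Fin 2 → ℂ :=
  fun p => if p.1 = p.2 then ((Real.sqrt 2 : ℂ))⁻¹ else 0

/-- The Bell-outcome projector m_i|φ⁺⟩⟨φ⁺|m_i† (with m_i on the second factor). -/
def bellOutcome (i : Fin 4) : Matrix (Fin 2 × Fin 2) (Fin 2 × Fin 2) ℂ :=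
  ((1 : Matrix (Fin 2) (Fin 2) ℂ) ⊗ₖ mMat i) *
    vecMulVec bellPhiPlus (star bellPhiPlus) *
    ((1 : Matrix (Fin 2) (Fin 2) ℂ) ⊗ₖ mMat i)ᴴ

/-- N-fold tensor product of single-qubit matrices, on the index type `Fin N → Fin 2`. -/
def tensorN (N : ℕ) (A : Fin N → Matrix (Fin 2) (Fin 2) ℂ) :
    Matrix (Fin N → Fin 2) (Fin N → Fin 2) ℂ :=
  fun f g => ∏ k, A k (f k) (g k)

/-- The state (⊗ₖ τ_k) ⊗ ρ, on (ancillas) × (systems). -/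
def bigStateN (N : ℕ) (τin : Fin N → Matrix (Fin 2) (Fin 2) ℂ)
    (ρ : Matrix (Fin N → Fin 2) (Fin N → Fin 2) ℂ) :
    Matrix ((Fin N → Fin 2) × (Fin N → Fin 2)) ((Fin N → Fin 2) × (Fin N → Fin 2)) ℂ :=
  fun p q => (∏ k, τin k (p.1 k) (q.1 k)) * ρ p.2 q.2

/-- The ideal Bell measurement operator for outcome tuple i: the k-th Bell
projector acts on the k-th ancilla and the k-th system. -/
def measN (N : ℕ) (i : Fin N → Fin 4) :
    Matrix ((Fin N → Fin 2) × (Fin N → Fin 2)) ((Fin N → Fin 2) × (Fin N → Fin 2)) ℂ :=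
  fun p q => ∏ k, bellOutcome (i k) (p.1 k, p.2 k) (q.1 k, q.2 k)

lemma mMat_real (i : Fin 4) (a b : Fin 2) : (starRingEnd ℂ) (mMat i a b) = mMat i a b := by
  fin_cases i <;> fin_cases a <;> fin_cases b <;>
    simp [mMat, σx, σz, Matrix.mul_apply, Fin.sum_univ_two]

lemma bellOutcome_apply (i : Fin 4) (a b c d : Fin 2) :
    bellOutcome i (a, b) (c, d) = (2:ℂ)⁻¹ * (mMat i b a * mMat i d c) := by
  have h2 : ((Real.sqrt 2 : ℂ))⁻¹ * ((Real.sqrt 2 : ℂ))⁻¹ = (2:ℂ)⁻¹ := by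
    rw [← mul_inv, ← Complex.ofReal_mul, Real.mul_self_sqrt (by norm_num)]
    norm_num
  simp only [bellOutcome, Matrix.mul_apply, Fintype.sum_prod_type, kroneckerMap_apply,
    Matrix.conjTranspose_apply, Matrix.one_apply, vecMulVec_apply, bellPhiPlus, Pi.star_apply,
    star_zero, RCLike.star_def]
  simp [Finset.sum_ite_eq, Finset.mul_sum, Finset.sum_mul, apply_ite, mul_ite, ite_mul,
    mMat_real, mul_comm, mul_assoc, mul_left_comm, h2]

lemma entry_eq (m τ : Matrix (Fin 2) (Fin 2) ℂ) (hm : ∀ a b, (starRingEnd ℂ) (m a b) = m a b)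
    (d b : Fin 2) :
    (m * τ * mᴴ) d b = ∑ ca : Fin 2 × Fin 2, m b ca.2 * m d ca.1 * τ ca.1 ca.2 := by
  simp only [Matrix.mul_apply, Matrix.conjTranspose_apply, RCLike.star_def, hm, Finset.sum_mul,
    Fintype.sum_prod_type]
  rw [Finset.sum_comm]
  exact Finset.sum_congr rfl fun c _ => Finset.sum_congr rfl fun a _ => by ring

lemma inner_eq (N : ℕ) (i : Fin N → Fin 4) (τin : Fin N → Matrix (Fin 2) (Fin 2) ℂ)
    (b d : Fin N → Fin 2) :
    ∏ k, (mMat (i k) * τin k * (mMat (i k))ᴴ) (d k) (b k)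
      = ∑ c : Fin N → Fin 2, ∑ a : Fin N → Fin 2,
          (∏ k, mMat (i k) (b k) (a k) * mMat (i k) (d k) (c k)) * ∏ k, τin k (c k) (a k) := by
  have h1 : ∀ k, (mMat (i k) * τin k * (mMat (i k))ᴴ) (d k) (b k)
      = ∑ ca : Fin 2 × Fin 2, mMat (i k) (b k) ca.2 * mMat (i k) (d k) ca.1 * τin k ca.1 ca.2 :=
    fun k => entry_eq _ _ (mMat_real (i k)) _ _
  calc ∏ k, (mMat (i k) * τin k * (mMat (i k))ᴴ) (d k) (b k)
      = ∏ k, ∑ ca : Fin 2 × Fin 2,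
          mMat (i k) (b k) ca.2 * mMat (i k) (d k) ca.1 * τin k ca.1 ca.2 :=
        Finset.prod_congr rfl fun k _ => h1 k
    _ = ∑ g ∈ Fintype.piFinset (fun _ : Fin N => (Finset.univ : Finset (Fin 2 × Fin 2))),
          ∏ k, mMat (i k) (b k) (g k).2 * mMat (i k) (d k) (g k).1 * τin k (g k).1 (g k).2 :=
        Finset.prod_univ_sum _ _
    _ = ∑ g : Fin N → Fin 2 × Fin 2,
          ∏ k, mMat (i k) (b k) (g k).2 * mMat (i k) (d k) (g k).1 * τin k (g k).1 (g k).2 := by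
        rw [Fintype.piFinset_univ]
    _ = ∑ p : (Fin N → Fin 2) × (Fin N → Fin 2),
          ∏ k, mMat (i k) (b k) (p.2 k) * mMat (i k) (d k) (p.1 k) * τin k (p.1 k) (p.2 k) := by
        exact Fintype.sum_equiv (Equiv.arrowProdEquivProdArrow (Fin N) (fun _ => Fin 2) (fun _ => Fin 2)) _ _
          (fun g => rfl)
    _ = ∑ c : Fin N → Fin 2, ∑ a : Fin N → Fin 2,
          ∏ k, mMat (i k) (b k) (a k) * mMat (i k) (d k) (c k) * τin k (c k) (a k) := by
        rw [Fintype.sum_prod_type]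
    _ = _ := by
        refine Finset.sum_congr rfl fun c _ => Finset.sum_congr rfl fun a _ => ?_
        rw [← Finset.prod_mul_distrib]

lemma sum4 {M α β γ δ : Type*} [AddCommMonoid M] [Fintype α] [Fintype β] [Fintype γ] [Fintype δ]
    (f : α → β → γ → δ → M) :
    ∑ a, ∑ b, ∑ c, ∑ d, f a b c d = ∑ b, ∑ d, ∑ c, ∑ a, f a b c d := by
  rw [Finset.sum_comm]
  refine Finset.sum_congr rfl fun b _ => ?_
  rw [Finset.sum_comm]
  refine (Finset.sum_congr rfl fun c _ => Finset.sum_comm).trans ?_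
  rw [Finset.sum_comm]


lemma key (N : ℕ) (i : Fin N → Fin 4) (τin : Fin N → Matrix (Fin 2) (Fin 2) ℂ)
    (ρ : Matrix (Fin N → Fin 2) (Fin N → Fin 2) ℂ) :
    (measN N i * bigStateN N τin ρ).trace
      = ((2:ℂ) ^ N)⁻¹ *
        (tensorN N (fun k => (mMat (i k) * τin k * (mMat (i k))ᴴ)ᵀ) * ρ).trace := by
  have lhs_eq : (measN N i * bigStateN N τin ρ).trace
      = ∑ a : Fin N → Fin 2, ∑ b : Fin N → Fin 2, ∑ c : Fin N → Fin 2, ∑ d : Fin N → Fin 2,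
          ((2:ℂ)⁻¹ ^ N * ∏ k, mMat (i k) (b k) (a k) * mMat (i k) (d k) (c k)) *
            ((∏ k, τin k (c k) (a k)) * ρ d b) := by
    simp only [Matrix.trace, Matrix.diag, Matrix.mul_apply, measN, bigStateN,
      bellOutcome_apply, Fintype.sum_prod_type, Finset.prod_mul_distrib, Finset.prod_const,
      Finset.card_univ, Fintype.card_fin]
  have rhs_eq : (tensorN N (fun k => (mMat (i k) * τin k * (mMat (i k))ᴴ)ᵀ) * ρ).trace
      = ∑ b : Fin N → Fin 2, ∑ d : Fin N → Fin 2,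
          (∑ c : Fin N → Fin 2, ∑ a : Fin N → Fin 2,
            (∏ k, mMat (i k) (b k) (a k) * mMat (i k) (d k) (c k)) * ∏ k, τin k (c k) (a k)) *
          ρ d b := by
    simp only [Matrix.trace, Matrix.diag, Matrix.mul_apply]
    refine Finset.sum_congr rfl fun b _ => Finset.sum_congr rfl fun d _ => ?_
    congr 1
    show ∏ k, (mMat (i k) * τin k * (mMat (i k))ᴴ)ᵀ (b k) (d k) = _
    simp only [Matrix.transpose_apply]
    rw [inner_eq]
  rw [lhs_eq, rhs_eq, sum4]
  rw [Finset.mul_sum]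
  refine Finset.sum_congr rfl fun b _ => ?_
  rw [Finset.mul_sum]
  refine Finset.sum_congr rfl fun d _ => ?_
  rw [Finset.sum_mul, Finset.mul_sum]
  refine Finset.sum_congr rfl fun c _ => ?_
  rw [Finset.sum_mul, Finset.mul_sum]
  refine Finset.sum_congr rfl fun a _ => ?_
  rw [← inv_pow]
  ring

/-- If `W = ∑_x β^i_x ⊗_k (m_{i_k} τ_{k,x_k} m_{i_k}†)ᵀ` for every outcome tuple i,
then with ideal Bell measurements the MDIEW value equals `2^N Tr[W ρ]`. -/
theorem stmt7 (N : ℕ) (W : Matrix (Fin N → Fin 2) (Fin N → Fin 2) ℂ)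
    (hW : W.IsHermitian)
    (τ : Fin N → Fin 4 → Matrix (Fin 2) (Fin 2) ℂ)
    (hτ : ∀ k x, IsDensity (τ k x))
    (β : (Fin N → Fin 4) → (Fin N → Fin 4) → ℝ)  -- β i x
    (hdec : ∀ i : Fin N → Fin 4,
      W = ∑ x : Fin N → Fin 4, (β i x : ℂ) •
        tensorN N (fun k => (mMat (i k) * τ k (x k) * (mMat (i k))ᴴ)ᵀ))
    (ρ : Matrix (Fin N → Fin 2) (Fin N → Fin 2) ℂ) (hρ : IsDensity ρ) :
    ∑ i : Fin N → Fin 4, ∑ x : Fin N → Fin 4, (β i x : ℂ) *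
        (measN N i * bigStateN N (fun k => τ k (x k)) ρ).trace
      = (2 ^ N : ℂ) * (W * ρ).trace := by
  have h2 : ∀ i : Fin N → Fin 4,
      ∑ x : Fin N → Fin 4, (β i x : ℂ) *
        (tensorN N (fun k => (mMat (i k) * τ k (x k) * (mMat (i k))ᴴ)ᵀ) * ρ).trace
        = (W * ρ).trace := by
    intro i
    conv_rhs => rw [hdec i]
    rw [Finset.sum_mul, Matrix.trace_sum]
    exact Finset.sum_congr rfl fun x _ => by
      rw [smul_mul_assoc, Matrix.trace_smul, smul_eq_mul]
  calc ∑ i : Fin N → Fin 4, ∑ x : Fin N → Fin 4, (β i x : ℂ) *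
        (measN N i * bigStateN N (fun k => τ k (x k)) ρ).trace
      = ∑ i : Fin N → Fin 4, ((2:ℂ) ^ N)⁻¹ * (W * ρ).trace := by
        refine Finset.sum_congr rfl fun i _ => ?_
        rw [← h2 i, Finset.mul_sum]
        refine Finset.sum_congr rfl fun x _ => ?_
        rw [key]
        ring
    _ = (2 ^ N : ℂ) * (W * ρ).trace := by
        rw [Finset.sum_const, Finset.card_univ, nsmul_eq_mul]
        have hc : (Fintype.card (Fin N → Fin 4) : ℂ) = 2 ^ N * 2 ^ N := by
          simp [Fintype.card_fun]
          rw [show (4:ℂ) = 2 * 2 by norm_num, mul_pow]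
        rw [hc]
        have h0 : (2:ℂ) ^ N ≠ 0 := pow_ne_zero _ two_ne_zero
        field_simp
end
end

section
/- Define a pure state |φ⟩ on (ℂ²)^{⊗N} to be k-producible if it factors as a tensor product of pure states each supported on at most k of the N parties, and a mixed state to be k-producible if it is a convex combination of k-producible pure states. Then for positive semidefinite operators M_1, …, M_N with M_j acting on ancilla⊗system of party j, the map 𝓜(ρ) = Tr_ρ[(M_1 ⊗ ⋯ ⊗ M_N)(I ⊗ ρ)] sends every k-producible state ρ to a nonnegative multiple of a k-producible state (on the ancilla spaces). -/
open Matrix ComplexOrder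

noncomputable section

/-- A k-producible state on N qubits: a convex combination of states, each of
which is a tensor product (over the blocks of a partition `π x` of the parties)
of density matrices supported on at most k parties. -/
def IsKProducibleState (N k : ℕ) (ρ : Matrix (Fin N → Fin 2) (Fin N → Fin 2) ℂ) : Prop :=
  ∃ (n : ℕ) (p : Fin n → ℝ) (π : Fin n → Fin N → Fin N)
    (σ : (x : Fin n) → (b : Fin N) →
      Matrix ({j // π x j = b} → Fin 2) ({j // π x j = b} → Fin 2) ℂ),
    (∀ x, 0 ≤ p x) ∧ (∑ x, p x = 1) ∧
    (∀ x b, Fintype.card {j // π x j = b} ≤ k) ∧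
    (∀ x b, (σ x b).PosSemidef ∧ (σ x b).trace = 1) ∧
    ρ = fun f g => ∑ x, (p x : ℂ) *
      ∏ b, σ x b (fun j => f j.1) (fun j => g j.1)

/-! ### Auxiliary lemmas -/

/-- The result of applying the local operators `M j` jointly to ancilla and system
qubits of a block and tracing out the system. -/
def tauM {ι : Type*} [Fintype ι] [DecidableEq ι]
    (M : ι → Matrix (Fin 2 × Fin 2) (Fin 2 × Fin 2) ℂ)
    (σ : Matrix (ι → Fin 2) (ι → Fin 2) ℂ) : Matrix (ι → Fin 2) (ι → Fin 2) ℂ :=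
  fun u v => ∑ s, ∑ t, (∏ j, M j (u j, s j) (v j, t j)) * σ t s

lemma sum4_rot {α β γ δ M : Type*} [Fintype α] [Fintype β] [Fintype γ] [Fintype δ]
    [AddCommMonoid M] (f : α → β → γ → δ → M) :
    ∑ a, ∑ b, ∑ c, ∑ d, f a b c d = ∑ c, ∑ d, ∑ a, ∑ b, f a b c d := by
  calc ∑ a, ∑ b, ∑ c, ∑ d, f a b c d
      = ∑ a, ∑ c, ∑ b, ∑ d, f a b c d :=
        Finset.sum_congr rfl fun a _ => Finset.sum_comm
    _ = ∑ c, ∑ a, ∑ b, ∑ d, f a b c d := Finset.sum_comm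
    _ = ∑ c, ∑ a, ∑ d, ∑ b, f a b c d :=
        Finset.sum_congr rfl fun c _ => Finset.sum_congr rfl fun a _ => Finset.sum_comm
    _ = ∑ c, ∑ d, ∑ a, ∑ b, f a b c d :=
        Finset.sum_congr rfl fun c _ => Finset.sum_comm

lemma sum3_rot {α β γ M : Type*} [Fintype α] [Fintype β] [Fintype γ]
    [AddCommMonoid M] (f : α → β → γ → M) :
    ∑ a, ∑ b, ∑ c, f a b c = ∑ c, ∑ a, ∑ b, f a b c := by
  calc ∑ a, ∑ b, ∑ c, f a b c
      = ∑ a, ∑ c, ∑ b, f a b c := Finset.sum_congr rfl fun a _ => Finset.sum_comm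
    _ = ∑ c, ∑ a, ∑ b, f a b c := Finset.sum_comm

lemma psd_exists_ctm {n : Type*} [Fintype n] {A : Matrix n n ℂ} (hA : A.PosSemidef) :
    ∃ B : Matrix n n ℂ, A = Bᴴ * B := by
  classical
  open scoped MatrixOrder in
  exact CStarAlgebra.nonneg_iff_eq_star_mul_self.mp hA.nonneg

lemma tauM_posSemidef {ι : Type*} [Fintype ι] [DecidableEq ι]
    {M : ι → Matrix (Fin 2 × Fin 2) (Fin 2 × Fin 2) ℂ}
    {σ : Matrix (ι → Fin 2) (ι → Fin 2) ℂ}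
    (hM : ∀ j, (M j).PosSemidef) (hσ : σ.PosSemidef) : (tauM M σ).PosSemidef := by
  choose A hA using fun j => psd_exists_ctm (hM j)
  obtain ⟨D, hD⟩ := psd_exists_ctm hσ
  set E : Matrix ((ι → Fin 2 × Fin 2) × (ι → Fin 2)) (ι → Fin 2) ℂ :=
    fun rw v => ∑ t, (∏ j, A j (rw.1 j) (v j, t j)) * star (D rw.2 t) with hE
  have key : tauM M σ = Eᴴ * E := by
    ext u v
    have lhs : tauM M σ u v =
        ∑ r : ι → Fin 2 × Fin 2, ∑ w : ι → Fin 2, ∑ s : ι → Fin 2, ∑ t : ι → Fin 2,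
          ((∏ j, star (A j (r j) (u j, s j))) * D w s) *
          ((∏ j, A j (r j) (v j, t j)) * star (D w t)) := by
      rw [← sum4_rot]
      unfold tauM
      refine Finset.sum_congr rfl fun s _ => Finset.sum_congr rfl fun t _ => ?_
      simp only [hA, hD, Matrix.mul_apply, Matrix.conjTranspose_apply]
      rw [Finset.prod_univ_sum]
      rw [Finset.sum_mul]
      rw [Fintype.piFinset_univ]
      refine Finset.sum_congr rfl fun r _ => ?_
      rw [Finset.mul_sum]
      refine Finset.sum_congr rfl fun w _ => ?_
      rw [Finset.prod_mul_distrib]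
      ring
    rw [lhs, Matrix.mul_apply]
    rw [Fintype.sum_prod_type]
    refine Finset.sum_congr rfl fun r _ => Finset.sum_congr rfl fun w _ => ?_
    rw [Matrix.conjTranspose_apply, hE]
    simp only [star_sum, star_mul', star_star, star_prod]
    rw [Finset.sum_mul_sum]
  rw [key]
  exact posSemidef_conjTranspose_mul_self E

def fiberPiEquiv {N : ℕ} (f : Fin N → Fin N) :
    (Fin N → Fin 2) ≃ ((b : Fin N) → {j // f j = b} → Fin 2) where
  toFun s b j := s j.1
  invFun S j := S (f j) ⟨j, rfl⟩
  left_inv s := rfl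
  right_inv S := by
    funext b j
    obtain ⟨j, rfl⟩ := j
    rfl

lemma prod_fiber {N : ℕ} (f : Fin N → Fin N) {M : Type*} [CommMonoid M] (g : Fin N → M) :
    ∏ j, g j = ∏ b, ∏ j : {j // f j = b}, g j.1 := by
  rw [← Fintype.prod_equiv (Equiv.sigmaFiberEquiv f) (fun p => g p.2.1) g (fun p => rfl),
    ← Finset.univ_sigma_univ, Finset.prod_sigma]

lemma factor_blocks {N : ℕ} (M : Fin N → Matrix (Fin 2 × Fin 2) (Fin 2 × Fin 2) ℂ)
    (f : Fin N → Fin N)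
    (σ : (b : Fin N) → Matrix ({j // f j = b} → Fin 2) ({j // f j = b} → Fin 2) ℂ)
    (u v : Fin N → Fin 2) :
    ∑ s : Fin N → Fin 2, ∑ t : Fin N → Fin 2,
      (∏ j, M j (u j, s j) (v j, t j)) * ∏ b, σ b (fun j => t j.1) (fun j => s j.1)
    = ∏ b, tauM (fun j : {j // f j = b} => M j.1) (σ b)
        (fun j => u j.1) (fun j => v j.1) := by
  have mid : ∑ s : Fin N → Fin 2, ∑ t : Fin N → Fin 2,
      (∏ j, M j (u j, s j) (v j, t j)) * ∏ b, σ b (fun j => t j.1) (fun j => s j.1)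
    = ∑ s : Fin N → Fin 2, ∑ t : Fin N → Fin 2, ∏ b,
        ((∏ j : {j // f j = b}, M j.1 (u j.1, s j.1) (v j.1, t j.1)) *
          σ b (fun j => t j.1) (fun j => s j.1)) := by
    refine Finset.sum_congr rfl fun s _ => Finset.sum_congr rfl fun t _ => ?_
    rw [prod_fiber f (fun j => M j (u j, s j) (v j, t j)), ← Finset.prod_mul_distrib]
  rw [mid]
  unfold tauM
  simp only [Finset.prod_univ_sum, Fintype.piFinset_univ]
  refine Fintype.sum_equiv (fiberPiEquiv f) _ _ fun s => ?_
  exact Fintype.sum_equiv (fiberPiEquiv f) _ _ fun t => rfl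

lemma psd_trace_nonneg {n : Type*} [Fintype n] [DecidableEq n]
    {A : Matrix n n ℂ} (hA : A.PosSemidef) : 0 ≤ A.trace := by
  rw [Matrix.trace]
  refine Finset.sum_nonneg fun i _ => ?_
  have := hA.dotProduct_mulVec_nonneg (Pi.single i 1)
  simpa [Matrix.mulVec, dotProduct, Pi.single_apply, Finset.mul_sum,
    Matrix.diag] using this

lemma psd_eq_zero_of_trace {n : Type*} [Fintype n]
    {A : Matrix n n ℂ} (hA : A.PosSemidef) (h : A.trace = 0) :
    A = 0 := by
  obtain ⟨B, rfl⟩ := psd_exists_ctm hA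
  suffices hB : B = 0 by rw [hB]; simp
  have h' : ∑ j, ∑ i, Complex.normSq (B i j) = 0 := by
    have := congrArg Complex.re h
    simpa [Matrix.trace, Matrix.diag, Matrix.mul_apply, Matrix.conjTranspose_apply,
      Complex.star_def, Complex.normSq_eq_conj_mul_self, Complex.re_sum, Complex.normSq_apply] using this
  ext i j
  have hj := (Finset.sum_eq_zero_iff_of_nonneg (fun j _ => Finset.sum_nonneg
    fun i _ => Complex.normSq_nonneg _)).mp h' j (Finset.mem_univ j)
  have hi := (Finset.sum_eq_zero_iff_of_nonneg (fun i _ => Complex.normSq_nonneg _)).mp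
    hj i (Finset.mem_univ i)
  simpa using Complex.normSq_eq_zero.mp hi

lemma psd_smul_real {n : Type*} [Fintype n]
    {A : Matrix n n ℂ} (hA : A.PosSemidef) {c : ℝ} (hc : 0 ≤ c) :
    ((c : ℂ) • A).PosSemidef := by
  rw [posSemidef_iff_dotProduct_mulVec]
  constructor
  · unfold Matrix.IsHermitian
    rw [Matrix.conjTranspose_smul, hA.1.eq]
    congr 1
    simp [Complex.star_def, Complex.conj_ofReal]
  · intro x
    rw [Matrix.smul_mulVec, dotProduct_smul]
    have : (0:ℂ) ≤ (c:ℂ) * (dotProduct (star x) (A.mulVec x)) :=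
      mul_nonneg (by exact_mod_cast hc) (hA.dotProduct_mulVec_nonneg x)
    simpa [smul_eq_mul] using this

/-- The map 𝓜(ρ) = Tr_ρ[(M₁ ⊗ ⋯ ⊗ M_N)(I ⊗ ρ)], where `M j` is a positive
semidefinite operator on the ancilla qubit and system qubit of party `j`,
sends every k-producible state to a nonnegative multiple of a k-producible
state on the ancilla spaces. -/
theorem stmt9 (N k : ℕ) (M : Fin N → Matrix (Fin 2 × Fin 2) (Fin 2 × Fin 2) ℂ)
    (hM : ∀ j, (M j).PosSemidef)
    (ρ : Matrix (Fin N → Fin 2) (Fin N → Fin 2) ℂ)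
    (hρ : IsKProducibleState N k ρ) :
    ∃ (c : ℝ) (ρ' : Matrix (Fin N → Fin 2) (Fin N → Fin 2) ℂ),
      0 ≤ c ∧ IsKProducibleState N k ρ' ∧
      -- 𝓜(ρ), the partial trace over the system qubits of (⊗ⱼ Mⱼ)(I ⊗ ρ)
      (fun (u v : Fin N → Fin 2) =>
          ∑ s : Fin N → Fin 2, ∑ t : Fin N → Fin 2,
            (∏ j, M j (u j, s j) (v j, t j)) * ρ t s)
        = (c : ℂ) • ρ' := by
  obtain ⟨n, p, π, σ, hp, hp1, hcard, hσ, hρeq⟩ := hρ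
  -- the block-transformed matrices
  set τ : (x : Fin n) → (b : Fin N) →
      Matrix ({j // π x j = b} → Fin 2) ({j // π x j = b} → Fin 2) ℂ :=
    fun x b => tauM (fun j : {j // π x j = b} => M j.1) (σ x b) with hτdef
  have hτ : ∀ x b, (τ x b).PosSemidef :=
    fun x b => tauM_posSemidef (fun j => hM j.1) (hσ x b).1
  set t : Fin n → Fin N → ℝ := fun x b => ((τ x b).trace).re with htdef
  have htr : ∀ x b, (τ x b).trace = (t x b : ℂ) := by
    intro x b
    have h := psd_trace_nonneg (hτ x b)
    rw [Complex.nonneg_iff] at h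
    exact Complex.ext rfl (by simpa using h.2.symm)
  have ht0 : ∀ x b, 0 ≤ t x b := by
    intro x b
    have h := psd_trace_nonneg (hτ x b)
    rw [Complex.nonneg_iff] at h
    exact h.1
  -- normalized block states
  set σ' : (x : Fin n) → (b : Fin N) →
      Matrix ({j // π x j = b} → Fin 2) ({j // π x j = b} → Fin 2) ℂ :=
    fun x b =>
      if (τ x b).trace = 0 then
        (((Fintype.card ({j // π x j = b} → Fin 2) : ℝ)⁻¹ : ℂ)) • 1
      else ((t x b : ℝ)⁻¹ : ℂ) • τ x b with hσ'def
  have hσ'good : ∀ x b, (σ' x b).PosSemidef ∧ (σ' x b).trace = 1 := by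
    intro x b
    simp only [hσ'def]
    by_cases h : (τ x b).trace = 0
    · rw [if_pos h]
      have hcpos : (0:ℝ) < (Fintype.card ({j // π x j = b} → Fin 2) : ℝ) := by
        exact_mod_cast Fintype.card_pos
      constructor
      · have hco : (((Fintype.card ({j // π x j = b} → Fin 2) : ℝ) : ℂ))⁻¹
            = Complex.ofReal ((Fintype.card ({j // π x j = b} → Fin 2) : ℝ)⁻¹) :=
          (Complex.ofReal_inv _).symm
        rw [hco]
        exact psd_smul_real Matrix.PosSemidef.one (inv_nonneg.mpr (Nat.cast_nonneg _))
      · rw [Matrix.trace_smul, Matrix.trace_one]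
        simp only [smul_eq_mul]
        push_cast
        rw [inv_mul_cancel₀]
        exact Nat.cast_ne_zero.mpr Fintype.card_pos.ne'
    · rw [if_neg h]
      have htne : t x b ≠ 0 := by
        intro h0
        exact h (by rw [htr x b, h0, Complex.ofReal_zero])
      constructor
      · rw [show ((t x b : ℂ))⁻¹ = (((t x b)⁻¹ : ℝ) : ℂ) from (Complex.ofReal_inv _).symm]
        exact psd_smul_real (hτ x b) (inv_nonneg.mpr (ht0 x b))
      · rw [Matrix.trace_smul, htr x b]
        simp only [smul_eq_mul]
        exact inv_mul_cancel₀ (by exact_mod_cast htne)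
  have hτσ' : ∀ x b, τ x b = (t x b : ℂ) • σ' x b := by
    intro x b
    simp only [hσ'def]
    by_cases h : (τ x b).trace = 0
    · rw [if_pos h]
      have hτ0 : τ x b = 0 := psd_eq_zero_of_trace (hτ x b) h
      have ht00 : t x b = 0 := by rw [htdef]; simp [h]
      rw [hτ0, ht00]
      simp
    · rw [if_neg h]
      have htne : (t x b : ℂ) ≠ 0 := by rw [← htr x b]; exact h
      rw [smul_smul, mul_inv_cancel₀ htne, one_smul]
  have hτσ'app : ∀ x b u' v', τ x b u' v' = (t x b : ℂ) * σ' x b u' v' := by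
    intro x b u' v'
    rw [hτσ' x b]
    simp [Matrix.smul_apply]
  -- coefficients
  set q : Fin n → ℝ := fun x => p x * ∏ b, t x b with hqdef
  have hq0 : ∀ x, 0 ≤ q x := fun x =>
    mul_nonneg (hp x) (Finset.prod_nonneg fun b _ => ht0 x b)
  set c : ℝ := ∑ x, q x with hcdef
  have hc0 : 0 ≤ c := Finset.sum_nonneg fun x _ => hq0 x
  -- the main computation
  have main : ∀ u v : Fin N → Fin 2,
      (∑ s : Fin N → Fin 2, ∑ t' : Fin N → Fin 2,
        (∏ j, M j (u j, s j) (v j, t' j)) * ρ t' s)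
      = ∑ x, (q x : ℂ) * ∏ b, σ' x b (fun j => u j.1) (fun j => v j.1) := by
    intro u v
    have step1 : (∑ s : Fin N → Fin 2, ∑ t' : Fin N → Fin 2,
        (∏ j, M j (u j, s j) (v j, t' j)) * ρ t' s)
      = ∑ x, (p x : ℂ) * ∑ s : Fin N → Fin 2, ∑ t' : Fin N → Fin 2,
          (∏ j, M j (u j, s j) (v j, t' j)) *
            ∏ b, σ x b (fun j => t' j.1) (fun j => s j.1) := by
      rw [hρeq]
      simp only [Finset.mul_sum]
      rw [sum3_rot (fun (s t' : Fin N → Fin 2) (x : Fin n) =>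
        (∏ j, M j (u j, s j) (v j, t' j)) *
          ((p x : ℂ) * ∏ b, σ x b (fun j => t' j.1) (fun j => s j.1)))]
      refine Finset.sum_congr rfl fun x _ => Finset.sum_congr rfl fun s _ =>
        Finset.sum_congr rfl fun t' _ => by ring
    rw [step1]
    refine Finset.sum_congr rfl fun x _ => ?_
    rw [factor_blocks M (π x) (σ x) u v]
    have : ∏ b, tauM (fun j : {j // π x j = b} => M j.1) (σ x b)
        (fun j => u j.1) (fun j => v j.1)
        = (∏ b, (t x b : ℂ)) * ∏ b, σ' x b (fun j => u j.1) (fun j => v j.1) := by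
      rw [← Finset.prod_mul_distrib]
      exact Finset.prod_congr rfl fun b _ => hτσ'app x b _ _
    rw [this, hqdef]
    push_cast
    ring
  by_cases hc : c = 0
  · refine ⟨0, ρ, le_refl 0, ⟨n, p, π, σ, hp, hp1, hcard, hσ, hρeq⟩, ?_⟩
    funext u v
    have hqall : ∀ x, q x = 0 := by
      intro x
      have := (Finset.sum_eq_zero_iff_of_nonneg (fun x _ => hq0 x)).mp
        (hcdef ▸ hc) x (Finset.mem_univ x)
      exact this
    simp only [main u v]
    simp [hqall]
  · refine ⟨c, fun u v => ∑ x, ((q x / c : ℝ) : ℂ) *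
      ∏ b, σ' x b (fun j => u j.1) (fun j => v j.1), hc0, ?_, ?_⟩
    · exact ⟨n, fun x => q x / c, π, σ',
        fun x => div_nonneg (hq0 x) hc0,
        by rw [← Finset.sum_div, ← hcdef, div_self hc],
        hcard, hσ'good, rfl⟩
    · funext u v
      have := main u v
      simp only [this]
      change _ = (c : ℂ) * ∑ x, ((q x / c : ℝ) : ℂ) * ∏ b, σ' x b (fun j => u j.1) (fun j => v j.1)
      simp only [Finset.mul_sum]
      refine Finset.sum_congr rfl fun x _ => ?_
      rw [← mul_assoc]
      congr 1
      push_cast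
      field_simp
end
end

section
/- The maximal squared overlap of the three-qubit W state |ψ_W⟩ = (|001⟩+|010⟩+|100⟩)/√3 with a fully product pure state |a⟩⊗|b⟩⊗|c⟩ equals 4/9; consequently Tr[(4/9 · I₈ − |ψ_W⟩⟨ψ_W|) σ] ≥ 0 for every fully separable three-qubit state σ. -/
open Matrix Kronecker ComplexOrder

noncomputable section

/-- The three-qubit W state |ψ_W⟩ = (|001⟩+|010⟩+|100⟩)/√3. -/
def psiW : Fin 2 × Fin 2 × Fin 2 → ℂ :=
  fun t => if t = (0, 0, 1) ∨ t = (0, 1, 0) ∨ t = (1, 0, 0)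
           then ((Real.sqrt 3 : ℂ))⁻¹ else 0

/-- Overlap ⟨ψ_W| (a ⊗ b ⊗ c). -/
def ovW (a b c : Fin 2 → ℂ) : ℂ :=
  ∑ t : Fin 2 × Fin 2 × Fin 2,
    (starRingEnd ℂ) (psiW t) * (a t.1 * b t.2.1 * c t.2.2)

/-! ### Part 1: the upper bound -/

lemma ovW_eq (a b c : Fin 2 → ℂ) :
    ovW a b c = ((Real.sqrt 3 : ℂ))⁻¹ * (a 0 * b 0 * c 1 + a 0 * b 1 * c 0 + a 1 * b 0 * c 0) := by
  simp [ovW, psiW, Fintype.sum_prod_type, Fin.sum_univ_two, Prod.ext_iff]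
  ring

lemma real_bound (α α' β β' γ γ' : ℝ)
    (h1 : α^2 + α'^2 = 1) (h2 : β^2 + β'^2 = 1) (h3 : γ^2 + γ'^2 = 1) :
    (α*β*γ' + α*β'*γ + α'*β*γ)^2 ≤ 4/3 := by
  have step1 : (α*β*γ' + α*β'*γ + α'*β*γ)^2 ≤ (β*γ'+β'*γ)^2 + (β*γ)^2 := by
    nlinarith [sq_nonneg (α*(β*γ) - α'*(β*γ'+β'*γ)), sq_nonneg (β*γ'+β'*γ), sq_nonneg (β*γ)]
  have step2 : (β*γ'+β'*γ)^2 + (β*γ)^2 ≤ 4/3 := by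
    nlinarith [sq_nonneg (β*β' - γ*γ'), sq_nonneg (β^2 + γ^2/2 - 1), sq_nonneg (γ^2 - 2/3)]
  linarith

lemma sqrt3_sq : ‖((Real.sqrt 3 : ℂ))⁻¹‖^2 = 1/3 := by
  rw [norm_inv, Complex.norm_real, Real.norm_eq_abs, abs_of_nonneg (Real.sqrt_nonneg 3),
    inv_pow, Real.sq_sqrt (by norm_num : (3:ℝ) ≥ 0)]
  norm_num

lemma part1 (a b c : Fin 2 → ℂ)
    (ha : ∑ i, ‖a i‖ ^ 2 = 1) (hb : ∑ i, ‖b i‖ ^ 2 = 1) (hc : ∑ i, ‖c i‖ ^ 2 = 1) :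
    ‖ovW a b c‖ ^ 2 ≤ 4 / 9 := by
  rw [Fin.sum_univ_two] at ha hb hc
  have hb2 : (‖a 0 * b 0 * c 1 + a 0 * b 1 * c 0 + a 1 * b 0 * c 0‖)^2 ≤ 4/3 := by
    have hS : ‖a 0 * b 0 * c 1 + a 0 * b 1 * c 0 + a 1 * b 0 * c 0‖
        ≤ ‖a 0‖*‖b 0‖*‖c 1‖ + ‖a 0‖*‖b 1‖*‖c 0‖ + ‖a 1‖*‖b 0‖*‖c 0‖ := by
      calc ‖a 0 * b 0 * c 1 + a 0 * b 1 * c 0 + a 1 * b 0 * c 0‖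
          ≤ ‖a 0 * b 0 * c 1 + a 0 * b 1 * c 0‖ + ‖a 1 * b 0 * c 0‖ := norm_add_le _ _
        _ ≤ ‖a 0 * b 0 * c 1‖ + ‖a 0 * b 1 * c 0‖ + ‖a 1 * b 0 * c 0‖ := by
            gcongr; exact norm_add_le _ _
        _ = _ := by simp [norm_mul]
    have := real_bound ‖a 0‖ ‖a 1‖ ‖b 0‖ ‖b 1‖ ‖c 0‖ ‖c 1‖ ha hb hc
    nlinarith [norm_nonneg (a 0 * b 0 * c 1 + a 0 * b 1 * c 0 + a 1 * b 0 * c 0)]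
  rw [ovW_eq, norm_mul, mul_pow, sqrt3_sq]
  linarith

/-! ### Part 2: the witness -/

lemma part2 : ∃ a b c : Fin 2 → ℂ,
      (∑ i, ‖a i‖ ^ 2 = 1) ∧ (∑ i, ‖b i‖ ^ 2 = 1) ∧ (∑ i, ‖c i‖ ^ 2 = 1) ∧
      ‖ovW a b c‖ ^ 2 = 4 / 9 := by
  have hr2 : Real.sqrt 2 * Real.sqrt 2 = 2 := Real.mul_self_sqrt (by norm_num)
  have hr3 : Real.sqrt 3 * Real.sqrt 3 = 3 := Real.mul_self_sqrt (by norm_num)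
  have hr3ne : Real.sqrt 3 ≠ 0 := by positivity
  set v : Fin 2 → ℂ :=
    fun i => ((if i = 0 then Real.sqrt 2 / Real.sqrt 3 else 1 / Real.sqrt 3 : ℝ) : ℂ) with hv
  have hnorm : ∑ i, ‖v i‖ ^ 2 = 1 := by
    rw [Fin.sum_univ_two]
    simp only [hv, if_pos rfl, Complex.norm_real, Real.norm_eq_abs, sq_abs]
    norm_num
    field_simp
    nlinarith [hr2, hr3]
  refine ⟨v, v, v, hnorm, hnorm, hnorm, ?_⟩
  have hov : ovW v v v = ((2/3 : ℝ) : ℂ) := by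
    rw [ovW_eq]
    simp only [hv]
    norm_num
    have hr2c : (Real.sqrt 2 : ℂ) * (Real.sqrt 2 : ℂ) = 2 := by exact_mod_cast hr2
    have hr3c : (Real.sqrt 3 : ℂ) * (Real.sqrt 3 : ℂ) = 3 := by exact_mod_cast hr3
    have hr3cne : (Real.sqrt 3 : ℂ) ≠ 0 := by exact_mod_cast hr3ne
    field_simp
    linear_combination (9:ℂ)*hr2c - (2*((Real.sqrt 3:ℂ)*(Real.sqrt 3:ℂ)) + 6)*hr3c
  rw [hov, Complex.norm_real, Real.norm_eq_abs, abs_of_nonneg (by norm_num : (0:ℝ) ≤ 2/3)]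
  norm_num

/-! ### Part 3: the quadratic form and spectral decomposition -/

def QF (M N K : Matrix (Fin 2) (Fin 2) ℂ) : ℂ :=
  ∑ t : Fin 2 × Fin 2 × Fin 2, ∑ s : Fin 2 × Fin 2 × Fin 2,
    (starRingEnd ℂ) (psiW t) * (M t.1 s.1 * N t.2.1 s.2.1 * K t.2.2 s.2.2) * psiW s

lemma trace_form (M N K : Matrix (Fin 2) (Fin 2) ℂ) :
    (vecMulVec psiW (star psiW) * (M ⊗ₖ (N ⊗ₖ K))).trace = QF M N K := by
  simp only [QF, Matrix.trace, Matrix.diag_apply, Matrix.mul_apply, vecMulVec_apply,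
    Pi.star_apply, kroneckerMap_apply, Complex.star_def]
  rw [Finset.sum_comm]
  refine Finset.sum_congr rfl fun s _ => Finset.sum_congr rfl fun t _ => ?_
  ring

lemma QF_pure (a b c : Fin 2 → ℂ) :
    QF (vecMulVec a (star a)) (vecMulVec b (star b)) (vecMulVec c (star c))
      = ovW a b c * (starRingEnd ℂ) (ovW a b c) := by
  rw [ovW, map_sum, Finset.sum_mul_sum]
  simp only [QF, vecMulVec_apply, Pi.star_apply, Complex.star_def]
  refine Finset.sum_congr rfl fun t _ => Finset.sum_congr rfl fun s _ => ?_
  simp only [_root_.map_mul, Complex.conj_conj]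
  ring

lemma QF_add1 (M M' N K : Matrix (Fin 2) (Fin 2) ℂ) :
    QF (M + M') N K = QF M N K + QF M' N K := by
  simp only [QF, Matrix.add_apply, ← Finset.sum_add_distrib]
  refine Finset.sum_congr rfl fun t _ => Finset.sum_congr rfl fun s _ => by ring

lemma QF_add2 (M N N' K : Matrix (Fin 2) (Fin 2) ℂ) :
    QF M (N + N') K = QF M N K + QF M N' K := by
  simp only [QF, Matrix.add_apply, ← Finset.sum_add_distrib]
  refine Finset.sum_congr rfl fun t _ => Finset.sum_congr rfl fun s _ => by ring

lemma QF_add3 (M N K K' : Matrix (Fin 2) (Fin 2) ℂ) :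
    QF M N (K + K') = QF M N K + QF M N K' := by
  simp only [QF, Matrix.add_apply, ← Finset.sum_add_distrib]
  refine Finset.sum_congr rfl fun t _ => Finset.sum_congr rfl fun s _ => by ring

lemma QF_smul1 (r : ℂ) (M N K : Matrix (Fin 2) (Fin 2) ℂ) :
    QF (r • M) N K = r * QF M N K := by
  simp only [QF, Matrix.smul_apply, smul_eq_mul, Finset.mul_sum]
  refine Finset.sum_congr rfl fun t _ => Finset.sum_congr rfl fun s _ => by ring

lemma QF_smul2 (r : ℂ) (M N K : Matrix (Fin 2) (Fin 2) ℂ) :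
    QF M (r • N) K = r * QF M N K := by
  simp only [QF, Matrix.smul_apply, smul_eq_mul, Finset.mul_sum]
  refine Finset.sum_congr rfl fun t _ => Finset.sum_congr rfl fun s _ => by ring

lemma QF_smul3 (r : ℂ) (M N K : Matrix (Fin 2) (Fin 2) ℂ) :
    QF M N (r • K) = r * QF M N K := by
  simp only [QF, Matrix.smul_apply, smul_eq_mul, Finset.mul_sum]
  refine Finset.sum_congr rfl fun t _ => Finset.sum_congr rfl fun s _ => by ring

lemma QF_sum1 {ι : Type*} (s : Finset ι) (f : ι → Matrix (Fin 2) (Fin 2) ℂ)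
    (N K : Matrix (Fin 2) (Fin 2) ℂ) :
    QF (∑ i ∈ s, f i) N K = ∑ i ∈ s, QF (f i) N K := by
  classical
  induction s using Finset.induction with
  | empty => simp [QF]
  | insert _ _ h ih => rw [Finset.sum_insert h, QF_add1, ih, Finset.sum_insert h]

lemma QF_sum2 {ι : Type*} (s : Finset ι) (M : Matrix (Fin 2) (Fin 2) ℂ)
    (f : ι → Matrix (Fin 2) (Fin 2) ℂ) (K : Matrix (Fin 2) (Fin 2) ℂ) :
    QF M (∑ i ∈ s, f i) K = ∑ i ∈ s, QF M (f i) K := by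
  classical
  induction s using Finset.induction with
  | empty => simp [QF]
  | insert _ _ h ih => rw [Finset.sum_insert h, QF_add2, ih, Finset.sum_insert h]

lemma QF_sum3 {ι : Type*} (s : Finset ι) (M N : Matrix (Fin 2) (Fin 2) ℂ)
    (f : ι → Matrix (Fin 2) (Fin 2) ℂ) :
    QF M N (∑ i ∈ s, f i) = ∑ i ∈ s, QF M N (f i) := by
  classical
  induction s using Finset.induction with
  | empty => simp [QF]
  | insert _ _ h ih => rw [Finset.sum_insert h, QF_add3, ih, Finset.sum_insert h]

lemma density_decomp (ρ : Matrix (Fin 2) (Fin 2) ℂ) (h : IsDensity ρ) :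
    ∃ (w : Fin 2 → ℝ) (v : Fin 2 → Fin 2 → ℂ),
      (∀ k, 0 ≤ w k) ∧ (∑ k, w k = 1) ∧ (∀ k, ∑ i, ‖v k i‖ ^ 2 = 1) ∧
      ρ = ∑ k, (w k : ℂ) • vecMulVec (v k) (star (v k)) := by
  have hH : ρ.IsHermitian := h.1.1
  set U : Matrix (Fin 2) (Fin 2) ℂ := (hH.eigenvectorUnitary : Matrix (Fin 2) (Fin 2) ℂ) with hU
  have hUnit : star U * U = 1 := by
    simpa [hU] using (Matrix.mem_unitaryGroup_iff'.mp hH.eigenvectorUnitary.2)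
  refine ⟨hH.eigenvalues, fun k i => U i k, fun k => h.1.eigenvalues_nonneg k, ?_, ?_, ?_⟩
  · have htr : ρ.trace = (∑ k, (hH.eigenvalues k : ℂ)) := by
      conv_lhs => rw [hH.spectral_theorem, Unitary.conjStarAlgAut_apply]
      rw [Matrix.trace_mul_cycle, ← hU, hUnit, Matrix.one_mul, Matrix.trace_diagonal]
      simp
    have := h.2
    rw [htr] at this
    have : ((∑ k, hH.eigenvalues k : ℝ) : ℂ) = 1 := by push_cast; simpa using this
    exact_mod_cast this
  · intro k
    have hcol : ∑ i, (starRingEnd ℂ) (U i k) * U i k = 1 := by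
      have := congrFun (congrFun hUnit k) k
      simpa [Matrix.mul_apply, Matrix.star_apply, Matrix.one_apply] using this
    have : ∑ i, ((‖U i k‖ ^ 2 : ℝ) : ℂ) = 1 := by
      rw [← hcol]
      refine Finset.sum_congr rfl fun i _ => ?_
      rw [mul_comm, Complex.mul_conj']
      norm_cast
    exact_mod_cast this
  · ext i j
    conv_lhs => rw [hH.spectral_theorem, Unitary.conjStarAlgAut_apply]
    simp only [Matrix.mul_apply, Matrix.diagonal_apply, Matrix.sum_apply, Matrix.smul_apply,
      vecMulVec_apply, Pi.star_apply, Matrix.star_apply, Function.comp, smul_eq_mul,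
      mul_ite, mul_zero, Finset.sum_ite_eq', Finset.mem_univ, if_true]
    refine Finset.sum_congr rfl fun k _ => ?_
    have hUa : ∀ i k, U i k = hH.eigenvectorBasis k i := fun i k => by
      rw [hU]; exact Matrix.IsHermitian.eigenvectorUnitary_apply hH i k
    rw [hUa i k, hUa j k]
    simp only [Matrix.IsHermitian.eigenvectorUnitary_apply]
    exact (mul_right_comm (hH.eigenvectorBasis k i) ((hH.eigenvalues k : ℝ) : ℂ)
      (star (hH.eigenvectorBasis k j))).trans (mul_comm _ _)

lemma mul_conj_eq_norm_sq (z : ℂ) : z * (starRingEnd ℂ) z = ((‖z‖ ^ 2 : ℝ) : ℂ) := by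
  rw [Complex.mul_conj]
  norm_cast
  rw [Complex.normSq_eq_norm_sq]

lemma QF_bound (ρ₁ ρ₂ ρ₃ : Matrix (Fin 2) (Fin 2) ℂ)
    (h₁ : IsDensity ρ₁) (h₂ : IsDensity ρ₂) (h₃ : IsDensity ρ₃) :
    ∃ r : ℝ, QF ρ₁ ρ₂ ρ₃ = (r : ℂ) ∧ 0 ≤ r ∧ r ≤ 4/9 := by
  obtain ⟨w₁, v₁, hw₁, hs₁, hv₁, hd₁⟩ := density_decomp ρ₁ h₁
  obtain ⟨w₂, v₂, hw₂, hs₂, hv₂, hd₂⟩ := density_decomp ρ₂ h₂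
  obtain ⟨w₃, v₃, hw₃, hs₃, hv₃, hd₃⟩ := density_decomp ρ₃ h₃
  refine ⟨∑ k, ∑ l, ∑ m, w₁ k * w₂ l * w₃ m * ‖ovW (v₁ k) (v₂ l) (v₃ m)‖ ^ 2, ?_, ?_, ?_⟩
  · rw [hd₁, hd₂, hd₃, QF_sum1]
    push_cast
    refine Finset.sum_congr rfl fun k _ => ?_
    rw [QF_smul1, QF_sum2, Finset.mul_sum]
    refine Finset.sum_congr rfl fun l _ => ?_
    rw [QF_smul2, QF_sum3, Finset.mul_sum, Finset.mul_sum]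
    refine Finset.sum_congr rfl fun m _ => ?_
    rw [QF_smul3, QF_pure, mul_conj_eq_norm_sq]
    push_cast
    ring
  · refine Finset.sum_nonneg fun k _ => Finset.sum_nonneg fun l _ =>
      Finset.sum_nonneg fun m _ => ?_
    exact mul_nonneg (mul_nonneg (mul_nonneg (hw₁ k) (hw₂ l)) (hw₃ m)) (sq_nonneg _)
  · calc ∑ k, ∑ l, ∑ m, w₁ k * w₂ l * w₃ m * ‖ovW (v₁ k) (v₂ l) (v₃ m)‖ ^ 2
        ≤ ∑ k, ∑ l, ∑ m, w₁ k * w₂ l * w₃ m * (4/9) := by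
          refine Finset.sum_le_sum fun k _ => Finset.sum_le_sum fun l _ =>
            Finset.sum_le_sum fun m _ => ?_
          have hb := part1 (v₁ k) (v₂ l) (v₃ m) (hv₁ k) (hv₂ l) (hv₃ m)
          have : 0 ≤ w₁ k * w₂ l * w₃ m := mul_nonneg (mul_nonneg (hw₁ k) (hw₂ l)) (hw₃ m)
          nlinarith
      _ = 4/9 := by
          simp only [← Finset.sum_mul]
          rw [show (∑ k, ∑ l, ∑ m, w₁ k * w₂ l * w₃ m) = (∑ k, w₁ k) * (∑ l, w₂ l) * (∑ m, w₃ m)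
            by rw [Finset.sum_mul_sum, Finset.sum_mul_sum]
               simp only [Fin.sum_univ_two]
               ring]
          rw [hs₁, hs₂, hs₃]
          norm_num

lemma term_nonneg (ρ₁ ρ₂ ρ₃ : Matrix (Fin 2) (Fin 2) ℂ)
    (h₁ : IsDensity ρ₁) (h₂ : IsDensity ρ₂) (h₃ : IsDensity ρ₃) :
    0 ≤ ((((4 / 9 : ℝ) : ℂ) • 1 - vecMulVec psiW (star psiW)) * (ρ₁ ⊗ₖ (ρ₂ ⊗ₖ ρ₃))).trace := by
  obtain ⟨r, hr, hr0, hr49⟩ := QF_bound ρ₁ ρ₂ ρ₃ h₁ h₂ h₃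
  rw [Matrix.sub_mul, Matrix.trace_sub, Matrix.smul_mul, Matrix.one_mul, Matrix.trace_smul,
    trace_form, hr, Matrix.trace_kronecker, Matrix.trace_kronecker, h₁.2, h₂.2, h₃.2]
  have : ((4 / 9 : ℝ) : ℂ) • ((1:ℂ) * (1 * 1)) - (r : ℂ) = (((4/9 - r : ℝ)) : ℂ) := by
    push_cast
    simp [smul_eq_mul]
  rw [this]
  exact Complex.zero_le_real.mpr (by linarith)

/-! ### Main theorem -/

/-- The maximal squared overlap of |ψ_W⟩ with a product pure state is 4/9;
consequently Tr[(4/9·I₈ − |ψ_W⟩⟨ψ_W|)σ] ≥ 0 for every fully separable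
three-qubit state σ. -/
theorem stmt13 :
    (∀ a b c : Fin 2 → ℂ,
      (∑ i, ‖a i‖ ^ 2 = 1) → (∑ i, ‖b i‖ ^ 2 = 1) → (∑ i, ‖c i‖ ^ 2 = 1) →
      ‖ovW a b c‖ ^ 2 ≤ 4 / 9) ∧
    (∃ a b c : Fin 2 → ℂ,
      (∑ i, ‖a i‖ ^ 2 = 1) ∧ (∑ i, ‖b i‖ ^ 2 = 1) ∧ (∑ i, ‖c i‖ ^ 2 = 1) ∧
      ‖ovW a b c‖ ^ 2 = 4 / 9) ∧
    (∀ (n : ℕ) (q : Fin n → ℝ) (σ₁ σ₂ σ₃ : Fin n → Matrix (Fin 2) (Fin 2) ℂ),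
      (∀ x, 0 ≤ q x) → (∑ x, q x = 1) →
      (∀ x, IsDensity (σ₁ x)) → (∀ x, IsDensity (σ₂ x)) → (∀ x, IsDensity (σ₃ x)) →
      0 ≤ ((((4 / 9 : ℝ) : ℂ) • 1 - vecMulVec psiW (star psiW)) *
        ∑ x, (q x : ℂ) • (σ₁ x ⊗ₖ (σ₂ x ⊗ₖ σ₃ x))).trace) := by
  refine ⟨part1, part2, ?_⟩
  intro n q σ₁ σ₂ σ₃ hq _hsum h₁ h₂ h₃
  rw [Matrix.mul_sum, Matrix.trace_sum]
  refine Finset.sum_nonneg fun x _ => ?_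
  rw [Matrix.mul_smul, Matrix.trace_smul, smul_eq_mul]
  exact mul_nonneg (Complex.zero_le_real.mpr (hq x)) (term_nonneg _ _ _ (h₁ x) (h₂ x) (h₃ x))
end
end
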